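/- Let $T$ be a non-singular transformation of a probability space $(X,\mathcal B,\lambda)$ with $\lambda$ exact, and suppose there exists an infinite $\sigma$-finite $T$-invariant measure $\mu\ll\lambda$. Then $\lambda$ is not full, i.e. there exists a measurable set $B$ with $\lambda(B)>0$ such that $\lambda(T^n(B))$ does not converge to $1$. -/

import Mathlib

open MeasureTheory Filter ENNReal

theorem stmt3 {X : Type*} [MeasurableSpace X]
    (T : X → X) (hT : Measurable T)
    (lam : Measure X) [IsProbabilityMeasure lam]
    (hns : ∀ A : Set X, MeasurableSet A → lam (T ⁻¹' A) = 0 → lam A = 0)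
    (P : (X → ℝ) → (X → ℝ))
    (hPint : ∀ f : X → ℝ, Integrable f lam → Integrable (P f) lam)
    (hP : ∀ f : X → ℝ, Integrable f lam → ∀ A : Set X, MeasurableSet A →
      ∫ x in A, P f x ∂lam = ∫ x in T ⁻¹' A, f x ∂lam)
    (hexact : ∀ f : X → ℝ, Integrable f lam → ∫ x, f x ∂lam = 0 →
      Tendsto (fun n => ∫ x, |P^[n] f x| ∂lam) atTop (nhds 0))
    (mu : Measure X) [SigmaFinite mu]
    (hinf : mu Set.univ = ∞)
    (hac : mu ≪ lam)
    (hinv : ∀ A : Set X, MeasurableSet A → mu (T ⁻¹' A) = mu A) :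
    ∃ B : Set X, MeasurableSet B ∧ 0 < lam B ∧
      ¬ Tendsto (fun n => lam (T^[n] '' B)) atTop (nhds 1) := by
  classical
  set g : X → ℝ≥0∞ := mu.rnDeriv lam with hgdef
  have hgmeas : Measurable g := Measure.measurable_rnDeriv mu lam
  -- iterates of P
  have hPiter : ∀ (n : ℕ) (f : X → ℝ), Integrable f lam → Integrable (P^[n] f) lam := by
    intro n
    induction n with
    | zero => intro f hf; simpa using hf
    | succ n ih =>
      intro f hf
      rw [Function.iterate_succ_apply]
      exact ih _ (hPint f hf)
  have hTiter : ∀ n : ℕ, Measurable (T^[n]) := fun n => hT.iterate n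
  have hiter : ∀ (n : ℕ) (f : X → ℝ), Integrable f lam → ∀ (A : Set X), MeasurableSet A →
      ∫ x in A, P^[n] f x ∂lam = ∫ x in T^[n] ⁻¹' A, f x ∂lam := by
    intro n
    induction n with
    | zero => intro f hf A hA; simp
    | succ n ih =>
      intro f hf A hA
      have h1 : (T^[n+1]) ⁻¹' A = T ⁻¹' (T^[n] ⁻¹' A) := by
        rw [Function.iterate_succ]
        exact Set.preimage_comp
      rw [Function.iterate_succ_apply, ih (P f) (hPint f hf) A hA,
        hP f hf _ ((hTiter n) hA), h1]
  have hmuiter : ∀ (n : ℕ) (A : Set X), MeasurableSet A → mu (T^[n] ⁻¹' A) = mu A := by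
    intro n
    induction n with
    | zero => intro A hA; simp
    | succ n ih =>
      intro A hA
      have h1 : (T^[n+1]) ⁻¹' A = T^[n] ⁻¹' (T ⁻¹' A) := by
        rw [Function.iterate_succ']
        exact Set.preimage_comp
      rw [h1, ih _ (hT hA), hinv A hA]
  -- choose K with lam {g ≤ K} > 0
  have hgfin : ∀ᵐ x ∂lam, g x < ⊤ := Measure.rnDeriv_lt_top mu lam
  have hKex : ∃ K : ℕ, 0 < lam {x | g x ≤ (K : ℝ≥0∞)} := by
    by_contra hcon
    push_neg at hcon
    have h0 : ∀ K : ℕ, lam {x | g x ≤ (K : ℝ≥0∞)} = 0 :=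
      fun K => le_antisymm (hcon K) zero_le
    have hcover : {x | g x < ⊤} ⊆ ⋃ K : ℕ, {x | g x ≤ (K : ℝ≥0∞)} := by
      intro x hx
      obtain ⟨K, hK⟩ := ENNReal.exists_nat_gt hx.ne
      exact Set.mem_iUnion.mpr ⟨K, hK.le⟩
    have h1 : lam {x | g x < ⊤} = 0 :=
      le_antisymm (le_trans (measure_mono hcover)
        (le_trans (measure_iUnion_le _) (by simp [h0]))) zero_le
    have h2 : lam {x | g x < ⊤}ᶜ = 0 := by
      have := ae_iff.mp hgfin
      simpa [Set.compl_setOf] using this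
    have h3 : (1 : ℝ≥0∞) ≤ 0 := by
      calc (1 : ℝ≥0∞) = lam Set.univ := (measure_univ).symm
        _ ≤ lam {x | g x < ⊤} + lam {x | g x < ⊤}ᶜ := by
            refine le_trans (measure_mono ?_) (measure_union_le _ _)
            simp
        _ = 0 := by rw [h1, h2]; simp
    simp at h3
  obtain ⟨K, hKpos⟩ := hKex
  set G : Set X := {x | g x ≤ (K : ℝ≥0∞)} with hGdef
  have hGmeas : MeasurableSet G := hgmeas measurableSet_Iic
  have hGc_lt : lam Gᶜ < 1 := by
    rw [measure_compl hGmeas (measure_ne_top lam G), measure_univ]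
    exact ENNReal.sub_lt_self one_ne_top one_ne_zero hKpos.ne'
  -- mu G ≤ K
  have hmuG : mu G ≤ (K : ℝ≥0∞) := by
    have h1 : mu G = ∫⁻ x in G, g x ∂lam := (Measure.setLIntegral_rnDeriv hac G).symm
    have h2 : ∫⁻ x in G, g x ∂lam ≤ ∫⁻ _x in G, (K : ℝ≥0∞) ∂lam := by
      refine setLIntegral_mono measurable_const ?_
      intro x hx
      exact hx
    have h3 : ∫⁻ _x in G, (K : ℝ≥0∞) ∂lam = (K : ℝ≥0∞) * lam G := by
      simp [lintegral_const]
    calc mu G = ∫⁻ x in G, g x ∂lam := h1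
      _ ≤ (K : ℝ≥0∞) * lam G := h2.trans h3.le
      _ ≤ (K : ℝ≥0∞) * 1 := by
          exact mul_le_mul_right (prob_le_one) _
      _ = (K : ℝ≥0∞) := mul_one _
  -- truncations
  set φ : ℕ → X → ℝ := fun k x => min ((g x).toReal) (k : ℝ) with hφdef
  have hφmeas : ∀ k, Measurable (φ k) := fun k => (hgmeas.ennreal_toReal).min measurable_const
  have hφnonneg : ∀ k x, 0 ≤ φ k x := fun k x => le_min ENNReal.toReal_nonneg (Nat.cast_nonneg k)
  have hφle : ∀ k x, φ k x ≤ (k : ℝ) := fun k x => min_le_right _ _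
  have hφint : ∀ k, Integrable (φ k) lam := by
    intro k
    refine Integrable.mono' (integrable_const (k : ℝ)) (hφmeas k).aestronglyMeasurable ?_
    refine Filter.Eventually.of_forall fun x => ?_
    rw [Real.norm_eq_abs, abs_of_nonneg (hφnonneg k x)]
    exact hφle k x
  have hφofReal : ∀ k x, ENNReal.ofReal (φ k x) ≤ g x := by
    intro k x
    by_cases hx : g x = ⊤
    · simp [hx]
    · calc ENNReal.ofReal (φ k x) ≤ ENNReal.ofReal ((g x).toReal) :=
          ENNReal.ofReal_le_ofReal (min_le_left _ _)
        _ = g x := ENNReal.ofReal_toReal hx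
  -- set integral of φ bounded by mu
  have hφset : ∀ (k : ℕ) (A : Set X), MeasurableSet A → mu A ≠ ⊤ →
      ∫ x in A, φ k x ∂lam ≤ (mu A).toReal := by
    intro k A hA hfin
    have h1 : ∫ x in A, φ k x ∂lam
        = (∫⁻ x in A, ENNReal.ofReal (φ k x) ∂lam).toReal := by
      refine integral_eq_lintegral_of_nonneg_ae ?_ (hφmeas k).aestronglyMeasurable.restrict
      exact Filter.Eventually.of_forall (hφnonneg k)
    have h2 : ∫⁻ x in A, ENNReal.ofReal (φ k x) ∂lam ≤ ∫⁻ x in A, g x ∂lam :=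
      lintegral_mono fun x => hφofReal k x
    have h3 : ∫⁻ x in A, g x ∂lam = mu A := Measure.setLIntegral_rnDeriv hac A
    rw [h1]
    exact ENNReal.toReal_mono hfin (h3 ▸ h2)
  -- c k := ∫ φ k, unbounded
  set c : ℕ → ℝ := fun k => ∫ x, φ k x ∂lam with hcdef
  have hceq : ∀ k, c k = (∫⁻ x, ENNReal.ofReal (φ k x) ∂lam).toReal := by
    intro k
    refine integral_eq_lintegral_of_nonneg_ae ?_ (hφmeas k).aestronglyMeasurable
    exact Filter.Eventually.of_forall (hφnonneg k)
  have hlfin : ∀ k : ℕ, ∫⁻ x, ENNReal.ofReal (φ k x) ∂lam ≤ (k : ℝ≥0∞) := by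
    intro k
    calc ∫⁻ x, ENNReal.ofReal (φ k x) ∂lam ≤ ∫⁻ _x, (k : ℝ≥0∞) ∂lam := by
          refine lintegral_mono fun x => ?_
          calc ENNReal.ofReal (φ k x) ≤ ENNReal.ofReal (k : ℝ) :=
              ENNReal.ofReal_le_ofReal (hφle k x)
            _ = (k : ℝ≥0∞) := ENNReal.ofReal_natCast k
      _ = (k : ℝ≥0∞) := by simp
  have hcsup : ∀ M : ℝ, ∃ k : ℕ, M ≤ c k := by
    intro M
    have hmono : Monotone fun k : ℕ => fun x => ENNReal.ofReal (φ k x) := by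
      intro k l hkl
      intro x
      exact ENNReal.ofReal_le_ofReal (min_le_min le_rfl (by exact_mod_cast hkl))
    have hsupeq : (fun x => ⨆ k : ℕ, ENNReal.ofReal (φ k x)) =ᵐ[lam] g := by
      filter_upwards [hgfin] with x hx
      refine le_antisymm (iSup_le fun k => hφofReal k x) ?_
      obtain ⟨k, hk⟩ := exists_nat_ge ((g x).toReal)
      have : g x = ENNReal.ofReal (φ k x) := by
        rw [hφdef]
        simp only
        rw [min_eq_left hk, ENNReal.ofReal_toReal hx.ne]
      rw [this]
      exact le_iSup (fun k => ENNReal.ofReal (φ k x)) k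
    have hsup : (⨆ k : ℕ, ∫⁻ x, ENNReal.ofReal (φ k x) ∂lam) = ⊤ := by
      rw [← lintegral_iSup (fun k => (hφmeas k).ennreal_ofReal) hmono,
        lintegral_congr_ae hsupeq, Measure.lintegral_rnDeriv hac, hinf]
    have hM : ENNReal.ofReal M < ⨆ k : ℕ, ∫⁻ x, ENNReal.ofReal (φ k x) ∂lam := by
      rw [hsup]; exact ENNReal.ofReal_lt_top
    obtain ⟨k, hk⟩ := lt_iSup_iff.mp hM
    refine ⟨k, ?_⟩
    have h1 : (ENNReal.ofReal M).toReal ≤ (∫⁻ x, ENNReal.ofReal (φ k x) ∂lam).toReal :=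
      ENNReal.toReal_mono (lt_of_le_of_lt (hlfin k) (by simp)).ne hk.le
    rw [hceq k]
    calc M ≤ (ENNReal.ofReal M).toReal := by
          by_cases hM0 : 0 ≤ M
          · rw [ENNReal.toReal_ofReal hM0]
          · push_neg at hM0
            exact le_trans hM0.le ENNReal.toReal_nonneg
      _ ≤ _ := h1
  -- key smallness: lam (T^[n] ⁻¹' G) → 0
  have hkey : ∀ ε : ℝ, 0 < ε → ∀ᶠ n in atTop,
      lam (T^[n] ⁻¹' G) ≤ ENNReal.ofReal ε := by
    intro ε hε
    obtain ⟨k, hk⟩ := hcsup (((K : ℝ) + 1) / ε)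
    have hckpos : 0 < c k := lt_of_lt_of_le (by positivity) hk
    set fk : X → ℝ := fun x => φ k x - c k with hfkdef
    have hfkint : Integrable fk lam := (hφint k).sub (integrable_const _)
    have hfkmean : ∫ x, fk x ∂lam = 0 := by
      rw [hfkdef]
      rw [integral_sub (hφint k) (integrable_const _)]
      simp [← hcdef]
      exact sub_self _
    have htend := hexact fk hfkint hfkmean
    filter_upwards [htend.eventually_lt_const (by norm_num : (0:ℝ) < 1)] with n hδ
    set S : Set X := T^[n] ⁻¹' G with hSdef
    have hSmeas : MeasurableSet S := (hTiter n) hGmeas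
    have hmuS : mu S = mu G := hmuiter n G hGmeas
    -- |∫_S fk| ≤ δ_n < 1
    have habs : |∫ x in S, fk x ∂lam| < 1 := by
      have e1 : ∫ x in G, P^[n] fk x ∂lam = ∫ x in S, fk x ∂lam :=
        hiter n fk hfkint G hGmeas
      have e2 : |∫ x in G, P^[n] fk x ∂lam| ≤ ∫ x in G, |P^[n] fk x| ∂lam := by
        simpa [Real.norm_eq_abs] using
          norm_integral_le_integral_norm (μ := lam.restrict G) (f := P^[n] fk)
      have e3 : ∫ x in G, |P^[n] fk x| ∂lam ≤ ∫ x, |P^[n] fk x| ∂lam := by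
        refine setIntegral_le_integral (hPiter n fk hfkint).abs ?_
        exact Filter.Eventually.of_forall fun x => abs_nonneg _
      rw [← e1]
      exact lt_of_le_of_lt (e2.trans e3) hδ
    have hsplit : ∫ x in S, fk x ∂lam = ∫ x in S, φ k x ∂lam - (lam S).toReal * c k := by
      rw [hfkdef]
      rw [integral_sub ((hφint k).integrableOn) (integrableOn_const (measure_ne_top _ _))]
      rw [setIntegral_const]
      simp [smul_eq_mul, Measure.real]
    have hbound : (lam S).toReal * c k ≤ (K : ℝ) + 1 := by
      have h1 : (lam S).toReal * c k = ∫ x in S, φ k x ∂lam - ∫ x in S, fk x ∂lam := by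
        rw [hsplit]; ring
      have h2 : ∫ x in S, φ k x ∂lam ≤ (mu S).toReal := by
        refine hφset k S hSmeas ?_
        rw [hmuS]
        exact (lt_of_le_of_lt hmuG (by simp)).ne
      have h3 : (mu S).toReal ≤ (K : ℝ) := by
        rw [hmuS]
        calc (mu G).toReal ≤ ((K : ℝ≥0∞)).toReal :=
            ENNReal.toReal_mono (by simp) hmuG
          _ = (K : ℝ) := by simp
      have h4 : -(∫ x in S, fk x ∂lam) ≤ 1 := by
        have := abs_lt.mp habs
        linarith [this.1]
      rw [h1]
      linarith [h2.trans h3]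
    have htoReal : (lam S).toReal ≤ ε := by
      have h5 : (lam S).toReal ≤ ((K : ℝ) + 1) / c k := by
        rw [le_div_iff₀ hckpos]
        exact hbound
      have h6 : ((K : ℝ) + 1) / c k ≤ ε := by
        rw [div_le_iff₀ hckpos]
        have := (div_le_iff₀ hε).mp (le_refl (((K : ℝ) + 1) / ε))
        calc ((K : ℝ) + 1) = (((K : ℝ) + 1) / ε) * ε := by field_simp
          _ ≤ c k * ε := by
            apply mul_le_mul_of_nonneg_right hk hε.le
          _ = ε * c k := by ring
      exact h5.trans h6
    exact (ENNReal.le_ofReal_iff_toReal_le (measure_ne_top _ _) hε.le).mpr htoReal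
  -- choose subsequence
  have hsel : ∀ j : ℕ, ∃ n : ℕ, j ≤ n ∧
      lam (T^[n] ⁻¹' G) ≤ ENNReal.ofReal ((1/2 : ℝ)^(j+2)) := by
    intro j
    have h1 := hkey ((1/2 : ℝ)^(j+2)) (by positivity)
    obtain ⟨N, hN⟩ := eventually_atTop.mp h1
    exact ⟨max j N, le_max_left _ _, hN _ (le_max_right _ _)⟩
  choose nseq hnseq1 hnseq2 using hsel
  set B : Set X := ⋂ j : ℕ, (T^[nseq j] ⁻¹' G)ᶜ with hBdef
  have hBmeas : MeasurableSet B :=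
    MeasurableSet.iInter fun j => ((hTiter (nseq j)) hGmeas).compl
  have hsum : ∑' j : ℕ, (1/2:ℝ)^(j+2) = 1/2 := by
    calc ∑' j:ℕ, (1/2:ℝ)^(j+2) = ∑' j:ℕ, (1/2:ℝ)^j * (1/2)^2 := by
          exact tsum_congr fun j => by rw [pow_add]
      _ = (∑' j:ℕ, (1/2:ℝ)^j) * (1/2)^2 := tsum_mul_right
      _ = 2 * ((1/2)^2) := by rw [tsum_geometric_two]
      _ = 1/2 := by norm_num
  have hsumm : Summable (fun j:ℕ => (1/2:ℝ)^(j+2)) := by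
    have he : (fun j:ℕ => (1/2:ℝ)^(j+2)) = fun j => (1/2:ℝ)^j * (1/2)^2 :=
      funext fun j => by rw [pow_add]
    rw [he]
    exact summable_geometric_two.mul_right _
  have hBc : lam Bᶜ ≤ ENNReal.ofReal (1/2 : ℝ) := by
    have h1 : Bᶜ = ⋃ j : ℕ, T^[nseq j] ⁻¹' G := by
      rw [hBdef, Set.compl_iInter]
      simp
    rw [h1]
    calc lam (⋃ j : ℕ, T^[nseq j] ⁻¹' G) ≤ ∑' j : ℕ, lam (T^[nseq j] ⁻¹' G) :=
        measure_iUnion_le _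
      _ ≤ ∑' j : ℕ, ENNReal.ofReal ((1/2 : ℝ)^(j+2)) := ENNReal.tsum_le_tsum hnseq2
      _ = ENNReal.ofReal (∑' j : ℕ, (1/2 : ℝ)^(j+2)) :=
          (ENNReal.ofReal_tsum_of_nonneg (fun j => by positivity) hsumm).symm
      _ = ENNReal.ofReal (1/2 : ℝ) := by rw [hsum]
  have hhalf : ENNReal.ofReal (1/2 : ℝ) < 1 := by
    rw [ENNReal.ofReal_lt_one]
    norm_num
  have hBpos : 0 < lam B := by
    rcases (show (0:ℝ≥0∞) ≤ lam B from zero_le).lt_or_eq with h | h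
    · exact h
    · exfalso
      have hc1 : lam Bᶜ = 1 := by
        rw [measure_compl hBmeas (measure_ne_top lam B), ← h, measure_univ]
        simp
      rw [hc1] at hBc
      exact absurd (lt_of_le_of_lt hBc hhalf) (lt_irrefl _)
  refine ⟨B, hBmeas, hBpos, ?_⟩
  intro hfull
  have hev : ∀ᶠ n in atTop, lam Gᶜ < lam (T^[n] '' B) :=
    hfull.eventually_const_lt hGc_lt
  obtain ⟨N, hN⟩ := eventually_atTop.mp hev
  have himg : T^[nseq N] '' B ⊆ Gᶜ := by
    rw [Set.image_subset_iff, Set.preimage_compl]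
    exact Set.iInter_subset _ N
  exact absurd (lt_of_lt_of_le (hN (nseq N) (hnseq1 N)) (measure_mono himg)) (lt_irrefl _)
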